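/- (Model construction for T_nD) Let P ⊆ 𝒫 be finite, p ∈ P, k ≥ 0, and δ ∈ D^P_k(T_nD). For every T_nD-model (M′,s′), if M′,s′ ⊨ δ^p, then there is a T_nD-model (M,s) such that M,s ⊨ δ and (M,s) ≅^col_p (M′,s′). -/

import Mathlib

/-!
Common framework: multi-agent epistemic modal logic with distributed knowledge.
Agents are `Fin n`, atoms are natural numbers.
-/

namespace DKLogic

/-- Formulas of the language `L_D`: atoms, negation, conjunction, disjunction and the
distributed-knowledge modality `D_B` for nonempty sets `B` of agents (together with the
constants `⊤`/`⊥`, which the paper uses as the empty conjunction/disjunction). -/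
inductive Formula (n : ℕ) : Type
  | top : Formula n
  | bot : Formula n
  | atom : ℕ → Formula n
  | neg : Formula n → Formula n
  | and : Formula n → Formula n → Formula n
  | or : Formula n → Formula n → Formula n
  | D : {B : Finset (Fin n) // B.Nonempty} → Formula n → Formula n

namespace Formula

/-- Modal depth of a formula. -/
def depth {n : ℕ} : Formula n → ℕ
  | top => 0
  | bot => 0
  | atom _ => 0
  | neg φ => depth φ
  | and φ ψ => max (depth φ) (depth ψ)
  | or φ ψ => max (depth φ) (depth ψ)
  | D _ φ => depth φ + 1

/-- The atoms occurring in a formula. -/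
def atoms {n : ℕ} : Formula n → Finset ℕ
  | top => ∅
  | bot => ∅
  | atom q => {q}
  | neg φ => atoms φ
  | and φ ψ => atoms φ ∪ atoms ψ
  | or φ ψ => atoms φ ∪ atoms ψ
  | D _ φ => atoms φ

end Formula

/-- A Kripke model over world type `W` with `n` agents. -/
structure KModel (n : ℕ) (W : Type) where
  R : Fin n → W → W → Prop
  V : W → Set ℕ

/-- The distributed accessibility relation `R_B = ⋂_{i ∈ B} R_i`. -/
def KModel.RB {n : ℕ} {W : Type} (M : KModel n W) (B : Finset (Fin n)) (s t : W) : Prop :=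
  ∀ i ∈ B, M.R i s t

/-- Satisfaction. -/
def Sat {n : ℕ} {W : Type} (M : KModel n W) : W → Formula n → Prop
  | _, .top => True
  | _, .bot => False
  | s, .atom q => q ∈ M.V s
  | s, .neg φ => ¬ Sat M s φ
  | s, .and φ ψ => Sat M s φ ∧ Sat M s ψ
  | s, .or φ ψ => Sat M s φ ∨ Sat M s ψ
  | s, .D B φ => ∀ t : W, M.RB B.1 s t → Sat M t φ

/-- Seriality of a relation. -/
def Serial {W : Type} (R : W → W → Prop) : Prop := ∀ x, ∃ y, R x y

/-- Euclideanness of a relation. -/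
def Euclidean {W : Type} (R : W → W → Prop) : Prop := ∀ x y z, R x y → R x z → R y z

/-- The six modal systems. -/
inductive MSys : Type
  | K | D | T | K45 | KD45 | S5

/-- `L`-models: frame conditions on each accessibility relation for each system. -/
def IsModel {n : ℕ} {W : Type} : MSys → KModel n W → Prop
  | .K, _ => True
  | .D, M => ∀ i, Serial (M.R i)
  | .T, M => ∀ i, Reflexive (M.R i)
  | .K45, M => ∀ i, Transitive (M.R i) ∧ Euclidean (M.R i)
  | .KD45, M => ∀ i, Serial (M.R i) ∧ Transitive (M.R i) ∧ Euclidean (M.R i)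
  | .S5, M => ∀ i, Reflexive (M.R i) ∧ Transitive (M.R i) ∧ Euclidean (M.R i)

/-- Semantic consequence over `L`-models. -/
def Entails {n : ℕ} (L : MSys) (φ ψ : Formula n) : Prop :=
  ∀ (W : Type) (M : KModel n W), IsModel L M → ∀ s : W, Sat M s φ → Sat M s ψ

/-- Semantic equivalence over `L`-models. -/
def EquivL {n : ℕ} (L : MSys) (φ ψ : Formula n) : Prop :=
  Entails L φ ψ ∧ Entails L ψ φ

/-- `L`-satisfiability. -/
def SatL {n : ℕ} (L : MSys) (φ : Formula n) : Prop :=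
  ∃ (W : Type) (M : KModel n W) (s : W), IsModel L M ∧ Sat M s φ

/-- Collective `p`-bisimulation between two pointed models. -/
def CollPBisim {n : ℕ} {W W' : Type} (M : KModel n W) (s : W) (M' : KModel n W') (s' : W')
    (p : ℕ) : Prop :=
  ∃ ρ : W → W' → Prop, ρ s s' ∧
    ∀ u u', ρ u u' →
      ((∀ q : ℕ, q ≠ p → (q ∈ M.V u ↔ q ∈ M'.V u')) ∧
       (∀ B : Finset (Fin n), B.Nonempty → ∀ v, M.RB B u v → ∃ v', M'.RB B u' v' ∧ ρ v v') ∧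
       (∀ B : Finset (Fin n), B.Nonempty → ∀ v', M'.RB B u' v' → ∃ v, M.RB B u v ∧ ρ v v'))

/-- `ψ` is a result of forgetting `p` in `φ` in system `L`
(written `dforget_L(φ,p) ≡_L ψ` in the paper). -/
def IsForget {n : ℕ} (L : MSys) (φ : Formula n) (p : ℕ) (ψ : Formula n) : Prop :=
  ψ.atoms ⊆ φ.atoms.erase p ∧
  (∀ (W W' : Type) (M : KModel n W) (M' : KModel n W') (s : W) (s' : W'),
      IsModel L M → IsModel L M' → Sat M s φ → CollPBisim M s M' s' p → Sat M' s' ψ) ∧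
  (∀ (W' : Type) (M' : KModel n W') (s' : W'),
      IsModel L M' → Sat M' s' ψ →
      ∃ (W : Type) (M : KModel n W) (s : W), IsModel L M ∧ Sat M s φ ∧ CollPBisim M s M' s' p)

/-- `L` is closed under forgetting: `dforget_L(φ,p)` exists (as an `L`-satisfiable formula)
for every `L`-satisfiable `φ` and every atom `p`. -/
def ClosedUnderForgetting {n : ℕ} (L : MSys) : Prop :=
  ∀ (φ : Formula n) (p : ℕ), SatL L φ → ∃ ψ : Formula n, SatL L ψ ∧ IsForget L φ p ψ

/-- `ψ` is a uniform interpolant of `φ` in `L` over `P \ {p}`. -/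
def IsUI {n : ℕ} (L : MSys) (P : Finset ℕ) (p : ℕ) (φ ψ : Formula n) : Prop :=
  SatL L ψ ∧ ψ.atoms ⊆ P.erase p ∧
  ∀ χ : Formula n, p ∉ χ.atoms → (Entails L φ χ ↔ Entails L ψ χ)

/-- The uniform interpolation property for the system `L`. -/
def HasUIP {n : ℕ} (L : MSys) : Prop :=
  ∀ (P : Finset ℕ) (p : ℕ) (φ : Formula n),
    p ∈ P → φ.atoms ⊆ P → SatL L φ → ∃ ψ : Formula n, IsUI L P p φ ψ

/-! ### Canonical formulas -/

/-- Big conjunction of a list of formulas (`⊤` for the empty list). -/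
def bigAnd {n : ℕ} : List (Formula n) → Formula n
  | [] => .top
  | φ :: l => .and φ (bigAnd l)

/-- Big disjunction of a list of formulas (`⊥` for the empty list). -/
def bigOr {n : ℕ} : List (Formula n) → Formula n
  | [] => .bot
  | φ :: l => .or φ (bigOr l)

/-- An injective numerical code of formulas, used to fix a canonical ordering. -/
def fcode {n : ℕ} : Formula n → ℕ
  | .top => Nat.pair 0 0
  | .bot => Nat.pair 1 0
  | .atom q => Nat.pair 2 q
  | .neg φ => Nat.pair 3 (fcode φ)
  | .and φ ψ => Nat.pair 4 (Nat.pair (fcode φ) (fcode ψ))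
  | .or φ ψ => Nat.pair 5 (Nat.pair (fcode φ) (fcode ψ))
  | .D B φ => Nat.pair 6 (Nat.pair (B.1.sum fun i => 2 ^ (i : ℕ)) (fcode φ))

/-- Insert a formula into a strictly `fcode`-sorted list (dropping duplicates). -/
def insertF {n : ℕ} (φ : Formula n) : List (Formula n) → List (Formula n)
  | [] => [φ]
  | ψ :: l =>
      if fcode φ < fcode ψ then φ :: ψ :: l
      else if fcode φ = fcode ψ then ψ :: l
      else ψ :: insertF φ l

/-- The canonical (sorted, duplicate-free) list representing the set of formulas in `l`. -/
def normList {n : ℕ} (l : List (Formula n)) : List (Formula n) := l.foldr insertF []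

/-- The minterm of `P` that is positive exactly on `S`. -/
def minterm {n : ℕ} (P S : Finset ℕ) : Formula n :=
  bigAnd ((P.sort (· ≤ ·)).map fun q =>
    if q ∈ S then Formula.atom q else Formula.neg (Formula.atom q))

/-- The subset of `Fin n` whose characteristic bits are those of `m`. -/
def natToFinset (n m : ℕ) : Finset (Fin n) :=
  Finset.univ.filter fun i => m.testBit (i : ℕ)

/-- A canonical enumeration of all nonempty subsets of the agent set. -/
def neSubsets (n : ℕ) : List {B : Finset (Fin n) // B.Nonempty} :=
  ((List.range (2 ^ n)).map (natToFinset n)).filterMap fun B =>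
    if h : B.Nonempty then some ⟨B, h⟩ else none

/-- `∇_B Φ = D_B (⋁Φ) ∧ ⋀_{φ ∈ Φ} ¬ D_B ¬ φ`. -/
def nabla {n : ℕ} (B : {B : Finset (Fin n) // B.Nonempty}) (Φ : List (Formula n)) : Formula n :=
  Formula.and (Formula.D B (bigOr Φ))
    (bigAnd (Φ.map fun φ => Formula.neg (Formula.D B (Formula.neg φ))))

/-- Underlying data of a d-canonical formula: a set of (positive) atoms together with,
for every set `B` of agents, a list of successor data. -/
inductive CData (n : ℕ) : Type
  | mk (S : Finset ℕ) (succ : Finset (Fin n) → List (CData n)) : CData n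

/-- The positive-atom component. -/
def CData.S {n : ℕ} : CData n → Finset ℕ
  | mk S _ => S

/-- The `B`-successor data. -/
def CData.succ {n : ℕ} : CData n → Finset (Fin n) → List (CData n)
  | mk _ f => f

/-- The d-canonical formula of depth `k` over `P` determined by the data `d`:
`δ_0 ∧ ⋀_{B} ∇_B Φ_B`. -/
def toFormula {n : ℕ} (P : Finset ℕ) : ℕ → CData n → Formula n
  | 0, d => minterm P (d.S ∩ P)
  | (k+1), d =>
      Formula.and (minterm P (d.S ∩ P))
        (bigAnd ((neSubsets n).map fun B =>
          nabla B (normList ((d.succ B.1).map fun c => toFormula P k c))))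

/-- `D^P_k`: the set of d-canonical formulas of depth `k` over `P`. -/
def DP {n : ℕ} (P : Finset ℕ) (k : ℕ) : Set (Formula n) := Set.range (toFormula P k)

/-- `R_B(δ)` for `δ` the level-`k` canonical formula with data `d`:
the set of `B`-successor canonical formulas (of level `k - 1`). -/
def RBset {n : ℕ} (P : Finset ℕ) (k : ℕ) (d : CData n) (B : Finset (Fin n)) :
    Set (Formula n) :=
  {φ | ∃ c ∈ d.succ B, φ = toFormula P (k - 1) c}

/-- One pruning step `δ ↦ δ^↓` on data (first argument: the level of the input). -/
def downD {n : ℕ} : ℕ → CData n → CData n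
  | 0, d => d
  | 1, d => CData.mk d.S (fun _ => [])
  | (k+2), d => CData.mk d.S (fun B => (d.succ B).map fun c => downD (k+1) c)

/-- `l`-fold pruning `δ ↦ δ^{↓l}` on data (first argument: the level of the input). -/
def downIter {n : ℕ} : ℕ → ℕ → CData n → CData n
  | _, 0, d => d
  | k, (l+1), d => downIter (k-1) l (downD k d)

/-- Truncation `δ ↦ δ^{↑l}` on data (first argument: the level of the input). -/
def upD {n : ℕ} : ℕ → ℕ → CData n → CData n
  | _, 0, d => CData.mk d.S (fun _ => [])
  | 0, (_+1), d => d
  | (k+1), (l+1), d => CData.mk d.S (fun B => (d.succ B).map fun c => upD k l c)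

/-- The canonical formula `δ` of level `k` with data `d`. -/
def cf {n : ℕ} (P : Finset ℕ) (k : ℕ) (d : CData n) : Formula n := toFormula P k d

/-- `δ^{↓l}` (a canonical formula of level `k - l`). -/
def cfDown {n : ℕ} (P : Finset ℕ) (k l : ℕ) (d : CData n) : Formula n :=
  toFormula P (k - l) (downIter k l d)

/-- `δ^{↑l}` (a canonical formula of level `min k l`). -/
def cfUp {n : ℕ} (P : Finset ℕ) (k l : ℕ) (d : CData n) : Formula n :=
  toFormula P (min k l) (upD k l d)

/-- Literal elimination: `φ^p` replaces every occurrence of `¬p` by `⊤` and subsequently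
every remaining occurrence of `p` by `⊤`. -/
def elim {n : ℕ} (p : ℕ) : Formula n → Formula n
  | .top => .top
  | .bot => .bot
  | .atom q => if q = p then .top else .atom q
  | .neg (.atom q) => if q = p then .top else .neg (.atom q)
  | .neg φ => .neg (elim p φ)
  | .and φ ψ => .and (elim p φ) (elim p ψ)
  | .or φ ψ => .or (elim p φ) (elim p ψ)
  | .D B φ => .D B (elim p φ)


/-! ### Auxiliary development -/

open Formula

section Aux

variable {n : ℕ}

/- Basic satisfaction lemmas -/

lemma sat_bigAnd {W : Type} (M : KModel n W) (s : W) (l : List (Formula n)) :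
    Sat M s (bigAnd l) ↔ ∀ φ ∈ l, Sat M s φ := by
  induction l with
  | nil => simp [bigAnd, Sat]
  | cons a l ih => simp [bigAnd, Sat, ih]

lemma sat_bigOr {W : Type} (M : KModel n W) (s : W) (l : List (Formula n)) :
    Sat M s (bigOr l) ↔ ∃ φ ∈ l, Sat M s φ := by
  induction l with
  | nil => simp [bigOr, Sat]
  | cons a l ih => simp [bigOr, Sat, ih]

lemma sat_neg {W : Type} (M : KModel n W) (s : W) (φ : Formula n) :
    Sat M s φ.neg ↔ ¬ Sat M s φ := Iff.rfl

lemma sat_and {W : Type} (M : KModel n W) (s : W) (φ ψ : Formula n) :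
    Sat M s (φ.and ψ) ↔ Sat M s φ ∧ Sat M s ψ := Iff.rfl

lemma sat_D {W : Type} (M : KModel n W) (s : W) (B : {B : Finset (Fin n) // B.Nonempty})
    (φ : Formula n) :
    Sat M s (Formula.D B φ) ↔ ∀ t, M.RB B.1 s t → Sat M t φ := Iff.rfl

lemma sat_nabla {W : Type} (M : KModel n W) (s : W) (B : {B : Finset (Fin n) // B.Nonempty})
    (Φ : List (Formula n)) :
    Sat M s (nabla B Φ) ↔
      (∀ t, M.RB B.1 s t → Sat M t (bigOr Φ)) ∧
      (∀ φ ∈ Φ, ∃ t, M.RB B.1 s t ∧ Sat M t φ) := by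
  rw [nabla, sat_and, sat_D, sat_bigAnd]
  constructor
  · rintro ⟨h1, h2⟩
    refine ⟨h1, fun φ hφ => ?_⟩
    have h3 := h2 _ (List.mem_map_of_mem hφ)
    rw [sat_neg, sat_D] at h3
    by_contra hc
    push_neg at hc
    exact h3 (fun t ht => (sat_neg M t φ).mpr (hc t ht))
  · rintro ⟨h1, h2⟩
    refine ⟨h1, fun ψ hψ => ?_⟩
    obtain ⟨φ, hφ, rfl⟩ := List.mem_map.mp hψ
    obtain ⟨t, ht, hs⟩ := h2 φ hφ
    rw [sat_neg, sat_D]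
    intro hall
    exact (sat_neg M t φ).mp (hall t ht) hs

/- elim distributes -/

lemma elim_bigAnd (p : ℕ) (l : List (Formula n)) :
    elim p (bigAnd l) = bigAnd (l.map (elim p)) := by
  induction l with
  | nil => rfl
  | cons a l ih => simp only [bigAnd, List.map]; rw [show elim p (a.and (bigAnd l)) =
      (elim p a).and (elim p (bigAnd l)) from rfl, ih]

lemma elim_bigOr (p : ℕ) (l : List (Formula n)) :
    elim p (bigOr l) = bigOr (l.map (elim p)) := by
  induction l with
  | nil => rfl
  | cons a l ih => simp only [bigOr, List.map]; rw [show elim p (a.or (bigOr l)) =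
      (elim p a).or (elim p (bigOr l)) from rfl, ih]

lemma elim_neg_and (p : ℕ) (a b : Formula n) :
    elim p ((a.and b).neg) = (elim p (a.and b)).neg := rfl

lemma elim_nabla (p : ℕ) (B : {B : Finset (Fin n) // B.Nonempty}) (Φ : List (Formula n))
    (hΦ : ∀ φ ∈ Φ, elim p (φ.neg) = (elim p φ).neg) :
    elim p (nabla B Φ) = nabla B (Φ.map (elim p)) := by
  rw [nabla, nabla]
  rw [show elim p ((Formula.D B (bigOr Φ)).and _) =
      (elim p (Formula.D B (bigOr Φ))).and (elim p (bigAnd (Φ.map fun φ =>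
        Formula.neg (Formula.D B (Formula.neg φ))))) from rfl]
  rw [show elim p (Formula.D B (bigOr Φ)) = Formula.D B (elim p (bigOr Φ)) from rfl, elim_bigOr,
    elim_bigAnd]
  congr 1
  rw [List.map_map, List.map_map]
  apply congrArg bigAnd
  apply List.map_congr_left
  intro φ hφ
  show elim p ((Formula.D B φ.neg).neg) = (Formula.D B (elim p φ).neg).neg
  rw [show elim p ((Formula.D B φ.neg).neg) = (elim p (Formula.D B φ.neg)).neg from rfl]
  rw [show elim p (Formula.D B φ.neg) = Formula.D B (elim p φ.neg) from rfl]
  rw [hΦ φ hφ]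

/- fcode injectivity -/

lemma sum_range_two_pow (m : ℕ) : ((Finset.range m).sum fun i => 2 ^ i) = 2 ^ m - 1 := by
  induction m with
  | zero => simp
  | succ m' ih =>
    rw [Finset.sum_range_succ, ih, pow_succ]
    have : (0:ℕ) < 2 ^ m' := Nat.pow_pos (by norm_num)
    omega

lemma sum_two_pow_lt' (B : Finset (Fin n)) (m : ℕ) (hm : ∀ i ∈ B, (i : ℕ) < m) :
    (B.sum fun i => 2 ^ (i : ℕ)) < 2 ^ m := by
  classical
  calc (B.sum fun i => 2 ^ (i : ℕ)) = (B.image (fun i : Fin n => (i : ℕ))).sum fun j => 2 ^ j := by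
        rw [Finset.sum_image]
        intro a _ b _ h
        exact Fin.val_injective h
    _ ≤ (Finset.range m).sum fun j => 2 ^ j := by
        apply Finset.sum_le_sum_of_subset
        intro j hj
        obtain ⟨i, hi, rfl⟩ := Finset.mem_image.mp hj
        exact Finset.mem_range.mpr (hm i hi)
    _ < 2 ^ m := by
        rw [sum_range_two_pow]
        have : (0:ℕ) < 2 ^ m := Nat.pow_pos (by norm_num)
        omega

lemma sum_two_pow_lt (B : Finset (Fin n)) : (B.sum fun i => 2 ^ (i : ℕ)) < 2 ^ n :=
  sum_two_pow_lt' B n (fun i _ => i.isLt)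

lemma testBit_sum_two_pow (B : Finset (Fin n)) (j : ℕ) :
    (B.sum fun i => 2 ^ (i : ℕ)).testBit j = true ↔ ∃ i ∈ B, (i : ℕ) = j := by
  classical
  induction B using Finset.induction_on_max with
  | empty => simp [Nat.zero_testBit]
  | insert a s ha ih =>
    have hanotmem : a ∉ s := fun h => lt_irrefl _ (ha a h)
    rw [Finset.sum_insert hanotmem]
    have hlt : (s.sum fun i => 2 ^ (i : ℕ)) < 2 ^ (a : ℕ) :=
      sum_two_pow_lt' s (a : ℕ) (fun i hi => ha i hi)
    rcases lt_trichotomy j (a : ℕ) with hj | hj | hj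
    · rw [Nat.testBit_two_pow_add_gt hj, ih]
      constructor
      · rintro ⟨i, hi, rfl⟩; exact ⟨i, Finset.mem_insert_of_mem hi, rfl⟩
      · rintro ⟨i, hi, rfl⟩
        rcases Finset.mem_insert.mp hi with rfl | hi
        · omega
        · exact ⟨i, hi, rfl⟩
    · subst hj
      rw [Nat.testBit_two_pow_add_eq]
      have hfalse : (s.sum fun i => 2 ^ (i : ℕ)).testBit (a : ℕ) = false :=
        Nat.testBit_eq_false_of_lt hlt
      rw [hfalse]
      exact ⟨fun _ => ⟨a, Finset.mem_insert_self a s, rfl⟩, fun _ => by simp⟩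
    · have hlt2 : 2 ^ (a : ℕ) + (s.sum fun i => 2 ^ (i : ℕ)) < 2 ^ j := by
        have h1 : 2 ^ ((a : ℕ) + 1) ≤ 2 ^ j := Nat.pow_le_pow_right (by norm_num) hj
        have h2 := pow_succ 2 (a : ℕ)
        omega
      rw [Nat.testBit_eq_false_of_lt hlt2]
      simp only [Bool.false_eq_true, false_iff]
      rintro ⟨i, hi, rfl⟩
      rcases Finset.mem_insert.mp hi with rfl | hi
      · omega
      · exact absurd (ha i hi) (by omega)

lemma natToFinset_sum (B : Finset (Fin n)) :
    natToFinset n (B.sum fun i => 2 ^ (i : ℕ)) = B := by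
  ext i
  simp only [natToFinset, Finset.mem_filter, Finset.mem_univ, true_and]
  rw [testBit_sum_two_pow]
  constructor
  · rintro ⟨i', hi', h⟩
    rwa [show i' = i from Fin.val_injective h] at hi'
  · intro h; exact ⟨i, h, rfl⟩

lemma sum_two_pow_injective (B B' : Finset (Fin n))
    (h : (B.sum fun i => 2 ^ (i : ℕ)) = B'.sum fun i => 2 ^ (i : ℕ)) : B = B' := by
  have h1 := natToFinset_sum (n := n) B
  rw [h, natToFinset_sum] at h1
  exact h1.symm

lemma fcode_injective : Function.Injective (fcode (n := n)) := by
  intro φ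
  induction φ with
  | top => intro ψ h; cases ψ <;> simp [fcode, Nat.pair_eq_pair] at h ⊢
  | bot => intro ψ h; cases ψ <;> simp [fcode, Nat.pair_eq_pair] at h ⊢
  | atom q => intro ψ h; cases ψ <;> simp [fcode, Nat.pair_eq_pair] at h ⊢; exact h
  | neg φ ih =>
    intro ψ h; cases ψ <;> simp [fcode, Nat.pair_eq_pair] at h ⊢
    exact ih h
  | and φ1 φ2 ih1 ih2 =>
    intro ψ h; cases ψ <;> simp [fcode, Nat.pair_eq_pair] at h ⊢
    exact ⟨ih1 h.1, ih2 h.2⟩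
  | or φ1 φ2 ih1 ih2 =>
    intro ψ h; cases ψ <;> simp [fcode, Nat.pair_eq_pair] at h ⊢
    exact ⟨ih1 h.1, ih2 h.2⟩
  | D B φ ih =>
    intro ψ h; cases ψ <;> simp [fcode, Nat.pair_eq_pair] at h ⊢
    obtain ⟨h1, h2⟩ := h
    exact ⟨Subtype.ext (sum_two_pow_injective _ _ h1), ih h2⟩

/- neSubsets completeness -/

lemma mem_neSubsets (B : {B : Finset (Fin n) // B.Nonempty}) : B ∈ neSubsets n := by
  rw [neSubsets, List.mem_filterMap]
  refine ⟨B.1, ?_, ?_⟩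
  · rw [List.mem_map]
    refine ⟨B.1.sum fun i => 2 ^ (i : ℕ), ?_, natToFinset_sum B.1⟩
    exact List.mem_range.mpr (sum_two_pow_lt B.1)
  · rw [dif_pos B.2]

/- normList -/

lemma mem_insertF (φ ψ : Formula n) (l : List (Formula n)) :
    ψ ∈ insertF φ l ↔ ψ = φ ∨ ψ ∈ l := by
  induction l with
  | nil => simp [insertF]
  | cons a l ih =>
    by_cases h1 : fcode φ < fcode a
    · simp [insertF, h1]
    · by_cases h2 : fcode φ = fcode a
      · have : φ = a := fcode_injective h2
        subst this
        simp only [insertF, h1, if_false, h2, if_true]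
        exact ⟨fun h => Or.inr h, fun h => h.elim (fun e => e ▸ List.mem_cons_self) id⟩
      · simp only [insertF, h1, if_false, h2, if_false]
        rw [List.mem_cons, ih, List.mem_cons]
        tauto

lemma normList_cons (a : Formula n) (l : List (Formula n)) :
    normList (a :: l) = insertF a (normList l) := rfl

lemma mem_normList (φ : Formula n) (l : List (Formula n)) :
    φ ∈ normList l ↔ φ ∈ l := by
  induction l with
  | nil => simp [normList]
  | cons a l ih => rw [normList_cons, mem_insertF, ih]; simp [List.mem_cons]

/-- The strict ordering on formulas by code. -/
def fr (a b : Formula n) : Prop := fcode a < fcode b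

lemma insertF_sorted (φ : Formula n) (l : List (Formula n)) (h : l.Pairwise fr) :
    (insertF φ l).Pairwise fr := by
  induction l with
  | nil => simp [insertF, List.Pairwise]
  | cons a l ih =>
    by_cases h1 : fcode φ < fcode a
    · rw [insertF, if_pos h1]
      refine List.pairwise_cons.mpr ⟨?_, h⟩
      intro b hb
      rcases List.mem_cons.mp hb with rfl | hb
      · exact h1
      · exact lt_trans h1 (List.rel_of_pairwise_cons h hb)
    · by_cases h2 : fcode φ = fcode a
      · rw [insertF, if_neg h1, if_pos h2]; exact h
      · rw [insertF, if_neg h1, if_neg h2]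
        rcases List.pairwise_cons.mp h with ⟨ha, hl⟩
        refine List.pairwise_cons.mpr ⟨?_, ih hl⟩
        intro b hb
        rcases (mem_insertF φ b l).mp hb with rfl | hb
        · exact lt_of_le_of_ne (not_lt.mp h1) (Ne.symm h2)
        · exact ha b hb

lemma normList_sorted (l : List (Formula n)) : (normList l).Pairwise fr := by
  induction l with
  | nil => simp [normList, List.Pairwise]
  | cons a l ih => rw [normList_cons]; exact insertF_sorted a _ ih

lemma sorted_ext : ∀ (l l' : List (Formula n)), l.Pairwise fr → l'.Pairwise fr →
    (∀ φ, φ ∈ l ↔ φ ∈ l') → l = l' := by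
  intro l
  induction l with
  | nil =>
    intro l' _ _ h
    cases l' with
    | nil => rfl
    | cons b l' => exact absurd ((h b).mpr (List.mem_cons_self)) List.not_mem_nil
  | cons a l ih =>
    intro l' hs hs' h
    cases l' with
    | nil => exact absurd ((h a).mp (List.mem_cons_self)) List.not_mem_nil
    | cons b l' =>
      rcases List.pairwise_cons.mp hs with ⟨ha, hl⟩
      rcases List.pairwise_cons.mp hs' with ⟨hb, hl'⟩
      have hab : a = b := by
        have h1 := (h a).mp (List.mem_cons_self)
        have h2 := (h b).mpr (List.mem_cons_self)
        rcases List.mem_cons.mp h1 with h1 | h1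
        · exact h1
        rcases List.mem_cons.mp h2 with h2 | h2
        · exact h2.symm
        exact absurd (lt_trans (hb a h1) (ha b h2)) (lt_irrefl _)
      subst hab
      have : l = l' := by
        apply ih l' hl hl'
        intro φ
        constructor
        · intro hφ
          rcases List.mem_cons.mp ((h φ).mp (List.mem_cons_of_mem a hφ)) with rfl | h'
          · exact absurd (ha φ hφ) (lt_irrefl _)
          · exact h'
        · intro hφ
          rcases List.mem_cons.mp ((h φ).mpr (List.mem_cons_of_mem a hφ)) with rfl | h'
          · exact absurd (hb φ hφ) (lt_irrefl _)
          · exact h'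
      rw [this]

lemma normList_ext (l l' : List (Formula n)) (h : ∀ φ, φ ∈ l ↔ φ ∈ l') :
    normList l = normList l' := by
  apply sorted_ext _ _ (normList_sorted l) (normList_sorted l')
  intro φ
  rw [mem_normList, mem_normList]
  exact h φ

/- injectivity of connective builders -/

lemma bigAnd_inj : ∀ (l l' : List (Formula n)), bigAnd l = bigAnd l' → l = l' := by
  intro l
  induction l with
  | nil => intro l' h; cases l' with
    | nil => rfl
    | cons b l' => exact absurd h (by simp [bigAnd])
  | cons a l ih =>
    intro l' h
    cases l' with
    | nil => exact absurd h (by simp [bigAnd])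
    | cons b l' =>
      simp only [bigAnd, Formula.and.injEq] at h
      rw [h.1, ih l' h.2]

lemma bigOr_inj : ∀ (l l' : List (Formula n)), bigOr l = bigOr l' → l = l' := by
  intro l
  induction l with
  | nil => intro l' h; cases l' with
    | nil => rfl
    | cons b l' => exact absurd h (by simp [bigOr])
  | cons a l ih =>
    intro l' h
    cases l' with
    | nil => exact absurd h (by simp [bigOr])
    | cons b l' =>
      simp only [bigOr, Formula.or.injEq] at h
      rw [h.1, ih l' h.2]

/- minterm -/

lemma sat_minterm {W : Type} (M : KModel n W) (s : W) (P A : Finset ℕ) :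
    Sat M s (minterm P A) ↔ ∀ q ∈ P, (q ∈ M.V s ↔ q ∈ A) := by
  rw [minterm, sat_bigAnd]
  constructor
  · intro h q hq
    have := h _ (List.mem_map_of_mem ((Finset.mem_sort _).mpr hq))
    by_cases hA : q ∈ A
    · rw [if_pos hA] at this
      exact ⟨fun _ => hA, fun _ => this⟩
    · rw [if_neg hA] at this
      rw [sat_neg] at this
      exact ⟨fun hv => absurd hv this, fun hA' => absurd hA' hA⟩
  · intro h ψ hψ
    obtain ⟨q, hq, rfl⟩ := List.mem_map.mp hψ
    have hq' := (Finset.mem_sort _).mp hq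
    by_cases hA : q ∈ A
    · rw [if_pos hA]
      exact (h q hq').mpr hA
    · rw [if_neg hA]
      rw [sat_neg]
      intro hv
      exact hA ((h q hq').mp hv)

lemma elim_minterm (p : ℕ) (P A : Finset ℕ) :
    elim p (minterm (n := n) P A) = bigAnd ((P.sort (· ≤ ·)).map fun q =>
      if q = p then Formula.top else
        if q ∈ A then Formula.atom q else Formula.neg (Formula.atom q)) := by
  rw [minterm, elim_bigAnd, List.map_map]
  apply congrArg bigAnd
  apply List.map_congr_left
  intro q _
  simp only [Function.comp]
  by_cases hA : q ∈ A
  · simp only [if_pos hA]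
    rfl
  · simp only [if_neg hA]
    rfl

lemma sat_elim_minterm {W : Type} (M : KModel n W) (s : W) (p : ℕ) (P A : Finset ℕ) :
    Sat M s (elim p (minterm P A)) ↔ ∀ q ∈ P, q ≠ p → (q ∈ M.V s ↔ q ∈ A) := by
  rw [elim_minterm, sat_bigAnd]
  constructor
  · intro h q hq hqp
    have := h _ (List.mem_map_of_mem ((Finset.mem_sort _).mpr hq))
    rw [if_neg hqp] at this
    by_cases hA : q ∈ A
    · rw [if_pos hA] at this
      exact ⟨fun _ => hA, fun _ => this⟩
    · rw [if_neg hA] at this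
      rw [sat_neg] at this
      exact ⟨fun hv => absurd hv this, fun hA' => absurd hA' hA⟩
  · intro h ψ hψ
    obtain ⟨q, hq, rfl⟩ := List.mem_map.mp hψ
    have hq' := (Finset.mem_sort _).mp hq
    by_cases hqp : q = p
    · rw [if_pos hqp]; trivial
    · rw [if_neg hqp]
      by_cases hA : q ∈ A
      · rw [if_pos hA]
        exact (h q hq' hqp).mpr hA
      · rw [if_neg hA]
        rw [sat_neg]
        intro hv
        exact hA ((h q hq' hqp).mp hv)

lemma minterm_inj (P A A' : Finset ℕ) (h : minterm (n := n) P A = minterm P A') :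
    ∀ q ∈ P, (q ∈ A ↔ q ∈ A') := by
  rw [minterm, minterm] at h
  have h2 := bigAnd_inj _ _ h
  intro q hq
  have h3 := List.map_inj_left.mp h2 q ((Finset.mem_sort _).mpr hq)
  by_cases hA : q ∈ A <;> by_cases hA' : q ∈ A' <;> simp [hA, hA'] at h3 ⊢

/- toFormula structure -/

lemma toFormula_succ (P : Finset ℕ) (k : ℕ) (c : CData n) :
    toFormula P (k+1) c = Formula.and (minterm P (c.S ∩ P))
      (bigAnd ((neSubsets n).map fun B =>
        nabla B (normList ((c.succ B.1).map fun e => toFormula P k e)))) := rfl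

lemma sat_toFormula_succ {W : Type} (M : KModel n W) (s : W) (P : Finset ℕ) (k : ℕ)
    (c : CData n) :
    Sat M s (toFormula P (k+1) c) ↔
      Sat M s (minterm P (c.S ∩ P)) ∧
      ∀ B : {B : Finset (Fin n) // B.Nonempty},
        (∀ t, M.RB B.1 s t → ∃ e ∈ c.succ B.1, Sat M t (toFormula P k e)) ∧
        (∀ e ∈ c.succ B.1, ∃ t, M.RB B.1 s t ∧ Sat M t (toFormula P k e)) := by
  rw [toFormula_succ, sat_and, sat_bigAnd]
  constructor
  · rintro ⟨h1, h2⟩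
    refine ⟨h1, fun B => ?_⟩
    have h3 := h2 _ (List.mem_map_of_mem (mem_neSubsets B))
    rw [sat_nabla] at h3
    constructor
    · intro t ht
      obtain ⟨φ, hφ, hsat⟩ := (sat_bigOr M t _).mp (h3.1 t ht)
      obtain ⟨e, he, rfl⟩ := List.mem_map.mp ((mem_normList _ _).mp hφ)
      exact ⟨e, he, hsat⟩
    · intro e he
      exact h3.2 _ ((mem_normList _ _).mpr (List.mem_map_of_mem he))
  · rintro ⟨h1, h2⟩
    refine ⟨h1, fun ψ hψ => ?_⟩
    obtain ⟨B, _, rfl⟩ := List.mem_map.mp hψ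
    rw [sat_nabla]
    constructor
    · intro t ht
      obtain ⟨e, he, hsat⟩ := (h2 B).1 t ht
      exact (sat_bigOr M t _).mpr ⟨toFormula P k e,
        (mem_normList _ _).mpr (List.mem_map_of_mem he), hsat⟩
    · intro φ hφ
      obtain ⟨e, he, rfl⟩ := List.mem_map.mp ((mem_normList _ _).mp hφ)
      exact (h2 B).2 e he

lemma tf_isAnd (P : Finset ℕ) (hP : P.Nonempty) (k : ℕ) (c : CData n) :
    ∃ a b : Formula n, toFormula P k c = Formula.and a b := by
  cases k with
  | succ k => exact ⟨_, _, rfl⟩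
  | zero =>
    obtain ⟨q, hq⟩ := hP
    show ∃ a b, minterm P (c.S ∩ P) = Formula.and a b
    rw [minterm]
    have hmem : (if q ∈ c.S ∩ P then Formula.atom (n := n) q else Formula.neg (Formula.atom q)) ∈
        ((P.sort (· ≤ ·)).map fun q =>
          if q ∈ c.S ∩ P then Formula.atom q else Formula.neg (Formula.atom q)) :=
      List.mem_map_of_mem ((Finset.mem_sort _).mpr hq)
    cases h : ((P.sort (· ≤ ·)).map fun q =>
        if q ∈ c.S ∩ P then Formula.atom q else Formula.neg (Formula.atom q)) with
    | nil => rw [h] at hmem; exact absurd hmem List.not_mem_nil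
    | cons a l => exact ⟨a, bigAnd l, rfl⟩

lemma elim_neg_tf (p : ℕ) (P : Finset ℕ) (hP : P.Nonempty) (k : ℕ) (c : CData n) :
    elim p ((toFormula P k c).neg) = (elim p (toFormula P k c)).neg := by
  obtain ⟨a, b, h⟩ := tf_isAnd P hP k c
  rw [h]
  rfl

lemma elim_toFormula_succ (p : ℕ) (P : Finset ℕ) (hP : P.Nonempty) (k : ℕ) (c : CData n) :
    elim p (toFormula P (k+1) c) = Formula.and (elim p (minterm (n := n) P (c.S ∩ P)))
      (bigAnd ((neSubsets n).map fun B =>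
        nabla B (((normList ((c.succ B.1).map fun e => toFormula P k e))).map (elim p)))) := by
  rw [toFormula_succ]
  rw [show elim p (Formula.and (minterm (n := n) P (c.S ∩ P)) (bigAnd ((neSubsets n).map fun B =>
        nabla B (normList ((c.succ B.1).map fun e => toFormula P k e)))) : Formula n) =
      Formula.and (elim p (minterm (n := n) P (c.S ∩ P))) (elim p (bigAnd ((neSubsets n).map fun B =>
        nabla B (normList ((c.succ B.1).map fun e => toFormula P k e))))) from rfl]
  rw [elim_bigAnd, List.map_map]
  apply congrArg
  apply congrArg bigAnd
  apply List.map_congr_left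
  intro B _
  show elim p (nabla B _) = _
  rw [elim_nabla]
  intro φ hφ
  obtain ⟨e, _, rfl⟩ := List.mem_map.mp ((mem_normList _ _).mp hφ)
  exact elim_neg_tf p P hP k e

lemma sat_elim_toFormula_succ {W : Type} (M : KModel n W) (s : W) (p : ℕ) (P : Finset ℕ)
    (hP : P.Nonempty) (k : ℕ) (c : CData n) :
    Sat M s (elim p (toFormula P (k+1) c)) ↔
      Sat M s (elim p (minterm (n := n) P (c.S ∩ P))) ∧
      ∀ B : {B : Finset (Fin n) // B.Nonempty},
        (∀ t, M.RB B.1 s t → ∃ e ∈ c.succ B.1, Sat M t (elim p (toFormula P k e))) ∧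
        (∀ e ∈ c.succ B.1, ∃ t, M.RB B.1 s t ∧ Sat M t (elim p (toFormula P k e))) := by
  rw [elim_toFormula_succ p P hP, sat_and, sat_bigAnd]
  constructor
  · rintro ⟨h1, h2⟩
    refine ⟨h1, fun B => ?_⟩
    have h3 := h2 _ (List.mem_map_of_mem (mem_neSubsets B))
    rw [sat_nabla] at h3
    constructor
    · intro t ht
      obtain ⟨φ, hφ, hsat⟩ := (sat_bigOr M t _).mp (h3.1 t ht)
      obtain ⟨ψ, hψ, rfl⟩ := List.mem_map.mp hφ
      obtain ⟨e, he, rfl⟩ := List.mem_map.mp ((mem_normList _ _).mp hψ)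
      exact ⟨e, he, hsat⟩
    · intro e he
      exact h3.2 _ (List.mem_map_of_mem ((mem_normList _ _).mpr (List.mem_map_of_mem he)))
  · rintro ⟨h1, h2⟩
    refine ⟨h1, fun ψ hψ => ?_⟩
    obtain ⟨B, _, rfl⟩ := List.mem_map.mp hψ
    rw [sat_nabla]
    constructor
    · intro t ht
      obtain ⟨e, he, hsat⟩ := (h2 B).1 t ht
      exact (sat_bigOr M t _).mpr ⟨elim p (toFormula P k e),
        List.mem_map_of_mem ((mem_normList _ _).mpr (List.mem_map_of_mem he)), hsat⟩
    · intro φ hφ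
      obtain ⟨ψ, hψ, rfl⟩ := List.mem_map.mp hφ
      obtain ⟨e, he, rfl⟩ := List.mem_map.mp ((mem_normList _ _).mp hψ)
      exact (h2 B).2 e he

/- upD lemmas -/

lemma upD_zero (k : ℕ) (d : CData n) : upD k 0 d = CData.mk d.S (fun _ => []) := by
  cases k <;> rfl

lemma upD_S (k l : ℕ) (d : CData n) : (upD k l d).S = d.S := by
  cases l with
  | zero => rw [upD_zero]; rfl
  | succ l => cases k with
    | zero => rfl
    | succ k => rfl

lemma toFormula_upD_self (P : Finset ℕ) : ∀ (k : ℕ) (c : CData n),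
    toFormula P k (upD k k c) = toFormula P k c := by
  intro k
  induction k with
  | zero => intro c; rfl
  | succ k ih =>
    intro c
    rw [show upD (k+1) (k+1) c = CData.mk c.S (fun B => (c.succ B).map fun e => upD k k e)
      from rfl]
    rw [toFormula_succ, toFormula_succ]
    apply congrArg
    apply congrArg bigAnd
    apply List.map_congr_left
    intro B _
    apply congrArg (nabla B)
    show normList (((c.succ B.1).map fun e => upD k k e).map fun e => toFormula P k e) = _
    rw [List.map_map]
    apply congrArg normList
    apply List.map_congr_left
    intro e _
    exact ih e

lemma toFormula_upD_comp (P : Finset ℕ) : ∀ (j k : ℕ) (c : CData n), j ≤ k →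
    toFormula P j (upD k j (upD (k+1) k c)) = toFormula P j (upD (k+1) j c) := by
  intro j
  induction j with
  | zero =>
    intro k c _
    show minterm P ((upD k 0 (upD (k+1) k c)).S ∩ P) = minterm P ((upD (k+1) 0 c).S ∩ P)
    rw [upD_S, upD_S, upD_S]
  | succ j ih =>
    intro k c hjk
    obtain ⟨m, rfl⟩ : ∃ m, k = m + 1 := ⟨k - 1, by omega⟩
    rw [show upD (m+2) (m+1) c = CData.mk c.S (fun B => (c.succ B).map fun e => upD (m+1) m e)
      from rfl]
    rw [show upD (m+1) (j+1) (CData.mk c.S (fun B => (c.succ B).map fun e => upD (m+1) m e)) =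
      CData.mk c.S (fun B => ((c.succ B).map fun e => upD (m+1) m e).map fun e => upD m j e)
      from rfl]
    rw [show upD (m+2) (j+1) c = CData.mk c.S (fun B => (c.succ B).map fun e => upD (m+1) j e)
      from rfl]
    rw [toFormula_succ, toFormula_succ]
    apply congrArg
    apply congrArg bigAnd
    apply List.map_congr_left
    intro B _
    apply congrArg (nabla B)
    show normList ((((c.succ B.1).map fun e => upD (m+1) m e).map fun e => upD m j e).map
      fun e => toFormula P j e) = normList (((c.succ B.1).map fun e => upD (m+1) j e).map
      fun e => toFormula P j e)
    rw [List.map_map, List.map_map, List.map_map]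
    apply congrArg normList
    apply List.map_congr_left
    intro e _
    exact ih m e (by omega)

lemma trunc_sat (P : Finset ℕ) : ∀ (k : ℕ) (c : CData n) {W : Type} (M : KModel n W) (s : W),
    Sat M s (toFormula P (k+1) c) → Sat M s (toFormula P k (upD (k+1) k c)) := by
  intro k
  induction k with
  | zero =>
    intro c W M s h
    exact ((sat_toFormula_succ M s P 0 c).mp h).1
  | succ k ih =>
    intro c W M s h
    rw [sat_toFormula_succ] at h
    rw [show upD (k+2) (k+1) c = CData.mk c.S (fun B => (c.succ B).map fun e => upD (k+1) k e)
      from rfl]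
    rw [sat_toFormula_succ]
    refine ⟨h.1, fun B => ?_⟩
    constructor
    · intro t ht
      obtain ⟨e, he, hsat⟩ := (h.2 B).1 t ht
      exact ⟨upD (k+1) k e, List.mem_map_of_mem he, ih e M t hsat⟩
    · intro e' he'
      obtain ⟨e, he, rfl⟩ := List.mem_map.mp he'
      obtain ⟨t, ht, hsat⟩ := (h.2 B).2 e he
      exact ⟨t, ht, ih e M t hsat⟩

/- decomposition of equalities of canonical formulas -/

lemma tf_succ_components (P : Finset ℕ) (k : ℕ) (c c' : CData n)
    (h : toFormula P (k+1) c = toFormula P (k+1) c') :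
    minterm (n := n) P (c.S ∩ P) = minterm P (c'.S ∩ P) ∧
    ∀ B : {B : Finset (Fin n) // B.Nonempty},
      normList ((c.succ B.1).map fun e => toFormula P k e) =
      normList ((c'.succ B.1).map fun e => toFormula P k e) := by
  rw [toFormula_succ, toFormula_succ, Formula.and.injEq] at h
  refine ⟨h.1, fun B => ?_⟩
  have h2 := bigAnd_inj _ _ h.2
  have h3 := List.map_inj_left.mp h2 B (mem_neSubsets B)
  rw [nabla, nabla, Formula.and.injEq, Formula.D.injEq] at h3
  exact bigOr_inj _ _ h3.1.2

lemma SP_eq (P A A' : Finset ℕ) (h : minterm (n := n) P (A ∩ P) = minterm P (A' ∩ P)) :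
    A ∩ P = A' ∩ P := by
  ext q
  by_cases hq : q ∈ P
  · have := minterm_inj P _ _ h q hq
    simpa using this
  · simp [hq]

lemma trunc_congr (P : Finset ℕ) : ∀ (j k : ℕ) (c c' : CData n), j ≤ k →
    toFormula P k c = toFormula P k c' →
    toFormula P j (upD k j c) = toFormula P j (upD k j c') := by
  intro j
  induction j with
  | zero =>
    intro k c c' _ h
    show minterm P ((upD k 0 c).S ∩ P) = minterm P ((upD k 0 c').S ∩ P)
    rw [upD_S, upD_S]
    have hSP : c.S ∩ P = c'.S ∩ P := by
      cases k with
      | zero => exact SP_eq P _ _ h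
      | succ m => exact SP_eq P _ _ (tf_succ_components P m c c' h).1
    rw [hSP]
  | succ j ih =>
    intro k c c' hjk h
    obtain ⟨m, rfl⟩ : ∃ m, k = m + 1 := ⟨k - 1, by omega⟩
    obtain ⟨h1, h2⟩ := tf_succ_components P m c c' h
    rw [show upD (m+1) (j+1) c = CData.mk c.S (fun B => (c.succ B).map fun e => upD m j e)
      from rfl]
    rw [show upD (m+1) (j+1) c' = CData.mk c'.S (fun B => (c'.succ B).map fun e => upD m j e)
      from rfl]
    rw [toFormula_succ, toFormula_succ]
    have hSP : c.S ∩ P = c'.S ∩ P := SP_eq P _ _ h1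
    rw [show (CData.mk c.S (fun B => (c.succ B).map fun e => upD m j e)).S = c.S from rfl,
      show (CData.mk c'.S (fun B => (c'.succ B).map fun e => upD m j e)).S = c'.S from rfl, hSP]
    apply congrArg
    apply congrArg bigAnd
    apply List.map_congr_left
    intro B _
    apply congrArg (nabla B)
    show normList (((c.succ B.1).map fun e => upD m j e).map fun e => toFormula P j e) =
      normList (((c'.succ B.1).map fun e => upD m j e).map fun e => toFormula P j e)
    rw [List.map_map, List.map_map]
    apply normList_ext
    intro φ
    simp only [List.mem_map, Function.comp]
    constructor
    · rintro ⟨e, he, rfl⟩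
      have hmem : toFormula P m e ∈ normList ((c'.succ B.1).map fun e => toFormula P m e) := by
        rw [← h2 B, mem_normList]
        exact List.mem_map_of_mem he
      obtain ⟨e', he', heq⟩ := List.mem_map.mp ((mem_normList _ _).mp hmem)
      exact ⟨e', he', (ih m e' e (by omega) heq).symm ▸ rfl⟩
    · rintro ⟨e, he, rfl⟩
      have hmem : toFormula P m e ∈ normList ((c.succ B.1).map fun e => toFormula P m e) := by
        rw [h2 B, mem_normList]
        exact List.mem_map_of_mem he
      obtain ⟨e', he', heq⟩ := List.mem_map.mp ((mem_normList _ _).mp hmem)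
      exact ⟨e', he', (ih m e' e (by omega) heq).symm ▸ rfl⟩

/- mutual exclusivity -/

lemma excl (P : Finset ℕ) : ∀ (k : ℕ) (c c' : CData n) {W : Type} (M : KModel n W) (s : W),
    Sat M s (toFormula P k c) → Sat M s (toFormula P k c') →
    toFormula P k c = toFormula P k c' := by
  intro k
  induction k with
  | zero =>
    intro c c' W M s h h'
    show minterm P (c.S ∩ P) = minterm P (c'.S ∩ P)
    have h1 := (sat_minterm M s P _).mp h
    have h2 := (sat_minterm M s P _).mp h'
    have : c.S ∩ P = c'.S ∩ P := by
      ext q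
      by_cases hq : q ∈ P
      · rw [← h1 q hq, ← h2 q hq]
      · simp [hq]
    rw [this]
  | succ k ih =>
    intro c c' W M s h h'
    rw [sat_toFormula_succ] at h h'
    rw [toFormula_succ, toFormula_succ]
    have hSP : c.S ∩ P = c'.S ∩ P := by
      have h1 := (sat_minterm M s P _).mp h.1
      have h2 := (sat_minterm M s P _).mp h'.1
      ext q
      by_cases hq : q ∈ P
      · rw [← h1 q hq, ← h2 q hq]
      · simp [hq]
    rw [hSP]
    apply congrArg
    apply congrArg bigAnd
    apply List.map_congr_left
    intro B _
    apply congrArg (nabla B)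
    apply sorted_ext _ _ (normList_sorted _) (normList_sorted _)
    intro φ
    rw [mem_normList, mem_normList]
    constructor
    · intro hφ
      obtain ⟨e, he, rfl⟩ := List.mem_map.mp hφ
      obtain ⟨t, ht, hsat⟩ := (h.2 B).2 e he
      obtain ⟨e', he', hsat'⟩ := (h'.2 B).1 t ht
      rw [ih e e' M t hsat hsat']
      exact List.mem_map_of_mem he'
    · intro hφ
      obtain ⟨e, he, rfl⟩ := List.mem_map.mp hφ
      obtain ⟨t, ht, hsat⟩ := (h'.2 B).2 e he
      obtain ⟨e', he', hsat'⟩ := (h.2 B).1 t ht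
      rw [ih e e' M t hsat hsat']
      exact List.mem_map_of_mem he'

/- consequences of T-satisfiability -/

lemma satT_succ (P : Finset ℕ) (k : ℕ) (c : CData n) (h : SatL MSys.T (toFormula P (k+1) c))
    (B : {B : Finset (Fin n) // B.Nonempty}) (e : CData n) (he : e ∈ c.succ B.1) :
    SatL MSys.T (toFormula P k e) := by
  obtain ⟨W0, M0, s0, hM0, hs0⟩ := h
  rw [sat_toFormula_succ] at hs0
  obtain ⟨t, _, ht⟩ := (hs0.2 B).2 e he
  exact ⟨W0, M0, t, hM0, ht⟩

lemma lemA (P : Finset ℕ) (k : ℕ) (c : CData n) (h : SatL MSys.T (toFormula P (k+1) c))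
    (B B' : {B : Finset (Fin n) // B.Nonempty}) (hsub : B'.1 ⊆ B.1)
    (e : CData n) (he : e ∈ c.succ B.1) :
    ∃ e' ∈ c.succ B'.1, toFormula P k e' = toFormula P k e := by
  obtain ⟨W0, M0, s0, hM0, hs0⟩ := h
  rw [sat_toFormula_succ] at hs0
  obtain ⟨t, ht, hsat⟩ := (hs0.2 B).2 e he
  have ht' : M0.RB B'.1 s0 t := fun i hi => ht i (hsub hi)
  obtain ⟨e', he', hsat'⟩ := (hs0.2 B').1 t ht'
  exact ⟨e', he', excl P k e' e M0 t hsat' hsat⟩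

lemma lemB (P : Finset ℕ) (k : ℕ) (c : CData n) (h : SatL MSys.T (toFormula P (k+1) c))
    (B : {B : Finset (Fin n) // B.Nonempty}) :
    ∃ e ∈ c.succ B.1, toFormula P k e = toFormula P k (upD (k+1) k c) := by
  obtain ⟨W0, M0, s0, hM0, hs0⟩ := h
  have hrefl : M0.RB B.1 s0 s0 := fun i _ => hM0 i s0
  have htr := trunc_sat P k c M0 s0 hs0
  rw [sat_toFormula_succ] at hs0
  obtain ⟨e, he, hsat⟩ := (hs0.2 B).1 s0 hrefl
  exact ⟨e, he, excl P k e _ M0 s0 hsat htr⟩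

end Aux

/-! ### The model construction for T -/

section Construction

variable {n : ℕ} (P : Finset ℕ) (p : ℕ) {W' : Type} (M' : KModel n W')

/-- The invariant attached to constructed worlds. -/
def Inv (j : ℕ) (u : W') (c : CData n) : Prop :=
  Sat M' u (elim p (toFormula P j c)) ∧ SatL MSys.T (toFormula P j c)

/-- The constructed model. -/
def Mc : KModel n (W' × CData n × Finset (Fin n) × ℕ) where
  R i x y := x = y
    ∨ (x.2.2.2 = y.2.2.2 + 1 ∧ i ∈ y.2.2.1 ∧ M'.R i x.1 y.1 ∧ Inv P p M' y.2.2.2 y.1 y.2.1 ∧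
        ∀ B' : {B' : Finset (Fin n) // B'.Nonempty}, B'.1 ⊆ y.2.2.1 →
          ∃ e ∈ x.2.1.succ B'.1, toFormula P y.2.2.2 e = toFormula P y.2.2.2 y.2.1)
    ∨ (x.2.2.2 = 0 ∧ y.2.2.2 = 0 ∧ M'.R i x.1 y.1)
  V x := {q | (q ∈ M'.V x.1 ∧ q ≠ p) ∨ (q = p ∧ p ∈ x.2.1.S)}

lemma Mc_model : IsModel MSys.T (Mc P p M') := fun _ _ => Or.inl rfl

lemma Mc_RB (B : Finset (Fin n)) (hB : B.Nonempty) (x y : W' × CData n × Finset (Fin n) × ℕ) :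
    (Mc P p M').RB B x y ↔ x = y
      ∨ (x.2.2.2 = y.2.2.2 + 1 ∧ B ⊆ y.2.2.1 ∧ (∀ i ∈ B, M'.R i x.1 y.1) ∧
          Inv P p M' y.2.2.2 y.1 y.2.1 ∧
          ∀ B' : {B' : Finset (Fin n) // B'.Nonempty}, B'.1 ⊆ y.2.2.1 →
            ∃ e ∈ x.2.1.succ B'.1, toFormula P y.2.2.2 e = toFormula P y.2.2.2 y.2.1)
      ∨ (x.2.2.2 = 0 ∧ y.2.2.2 = 0 ∧ ∀ i ∈ B, M'.R i x.1 y.1) := by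
  constructor
  · intro h
    by_cases hxy : x = y
    · exact Or.inl hxy
    obtain ⟨i0, hi0⟩ := hB
    rcases h i0 hi0 with h0 | h0 | h0
    · exact absurd h0 hxy
    · refine Or.inr (Or.inl ⟨h0.1, ?_, ?_, h0.2.2.2.1, h0.2.2.2.2⟩)
      · intro i hi
        rcases h i hi with h1 | h1 | h1
        · exact absurd h1 hxy
        · exact h1.2.1
        · exact absurd h0.1 (by omega)
      · intro i hi
        rcases h i hi with h1 | h1 | h1
        · exact absurd h1 hxy
        · exact h1.2.2.1
        · exact absurd h0.1 (by omega)
    · refine Or.inr (Or.inr ⟨h0.1, h0.2.1, ?_⟩)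
      intro i hi
      rcases h i hi with h1 | h1 | h1
      · exact absurd h1 hxy
      · exact absurd h1.1 (by omega)
      · exact h1.2.2
  · rintro (rfl | h | h) i hi
    · exact Or.inl rfl
    · exact Or.inr (Or.inl ⟨h.1, h.2.1 hi, h.2.2.1 i hi, h.2.2.2.1, h.2.2.2.2⟩)
    · exact Or.inr (Or.inr ⟨h.1, h.2.1, h.2.2 i hi⟩)

lemma inv_atoms (j : ℕ) (u : W') (c : CData n) (hP : P.Nonempty)
    (h : Sat M' u (elim p (toFormula P j c))) :
    ∀ q ∈ P, q ≠ p → (q ∈ M'.V u ↔ q ∈ c.S ∩ P) := by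
  cases j with
  | zero => exact (sat_elim_minterm M' u p P (c.S ∩ P)).mp h
  | succ j =>
    exact (sat_elim_minterm M' u p P (c.S ∩ P)).mp
      ((sat_elim_toFormula_succ M' u p P hP j c).mp h).1

lemma sat_Mc_minterm (hp : p ∈ P) (u : W') (c : CData n) (A : Finset (Fin n)) (j k' : ℕ)
    (hinv : Sat M' u (elim p (toFormula P k' c))) :
    Sat (Mc P p M') (u, c, A, j) (minterm P (c.S ∩ P)) := by
  rw [sat_minterm]
  intro q hq
  show ((q ∈ M'.V u ∧ q ≠ p) ∨ (q = p ∧ p ∈ c.S)) ↔ q ∈ c.S ∩ P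
  by_cases hqp : q = p
  · subst hqp
    constructor
    · rintro (⟨_, hne⟩ | ⟨_, h⟩)
      · exact absurd rfl hne
      · exact Finset.mem_inter.mpr ⟨h, hp⟩
    · intro h
      exact Or.inr ⟨rfl, (Finset.mem_inter.mp h).1⟩
  · constructor
    · rintro (⟨h, _⟩ | ⟨h, _⟩)
      · exact (inv_atoms P p M' k' u c ⟨p, hp⟩ hinv q hq hqp).mp h
      · exact absurd h hqp
    · intro h
      exact Or.inl ⟨(inv_atoms P p M' k' u c ⟨p, hp⟩ hinv q hq hqp).mpr h, hqp⟩

lemma SM (hp : p ∈ P) :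
    ∀ (j k' : ℕ) (c : CData n) (u : W') (A : Finset (Fin n)), j ≤ k' →
      Inv P p M' k' u c →
      Sat (Mc P p M') (u, c, A, k') (toFormula P j (upD k' j c)) := by
  have hP : P.Nonempty := ⟨p, hp⟩
  intro j
  induction j with
  | zero =>
    intro k' c u A _ hinv
    have heq : toFormula P 0 (upD k' 0 c) = minterm (n := n) P (c.S ∩ P) := by
      show minterm P ((upD k' 0 c).S ∩ P) = _
      rw [upD_S]
    rw [heq]
    exact sat_Mc_minterm P p M' hp u c A k' k' hinv.1
  | succ j ih =>
    intro k' c u A hjk hinv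
    obtain ⟨m, rfl⟩ : ∃ m, k' = m + 1 := ⟨k' - 1, by omega⟩
    have hjm : j ≤ m := by omega
    rw [show upD (m+1) (j+1) c = CData.mk c.S (fun B => (c.succ B).map fun e => upD m j e)
      from rfl]
    rw [sat_toFormula_succ]
    constructor
    · show Sat (Mc P p M') (u, c, A, m+1) (minterm P (c.S ∩ P))
      exact sat_Mc_minterm P p M' hp u c A (m+1) (m+1) hinv.1
    · intro B
      constructor
      · intro t ht
        rcases (Mc_RB P p M' B.1 B.2 _ t).mp ht with heq | hedge | h0
        · -- self successor
          obtain ⟨e, he, heq2⟩ := lemB P m c hinv.2 B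
          refine ⟨upD m j e, List.mem_map_of_mem he, ?_⟩
          have h1 := ih (m+1) c u A (by omega) hinv
          have h2 := trunc_congr P j m e (upD (m+1) m c) hjm heq2
          rw [h2, toFormula_upD_comp P j m c hjm]
          rw [← heq]
          exact h1
        · -- edge successor
          obtain ⟨v, c', A', lv⟩ := t
          have hlv : m = lv := by
            have h9 := hedge.1
            simp only at h9
            omega
          subst hlv
          obtain ⟨e, he, heq2⟩ := hedge.2.2.2.2 B hedge.2.1
          refine ⟨upD m j e, List.mem_map_of_mem he, ?_⟩
          have h1 := ih m c' v A' hjm hedge.2.2.2.1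
          rwa [trunc_congr P j m e c' hjm heq2]
        · exact absurd h0.1 (by simp)
      · intro e' he'
        obtain ⟨e, he, rfl⟩ := List.mem_map.mp he'
        obtain ⟨v, hv, hsat⟩ :=
          (((sat_elim_toFormula_succ M' u p P hP m c).mp hinv.1).2 B).2 e he
        have hsatT : SatL MSys.T (toFormula P m e) := satT_succ P m c hinv.2 B e he
        refine ⟨(v, e, B.1, m), ?_, ?_⟩
        · rw [Mc_RB P p M' B.1 B.2]
          refine Or.inr (Or.inl ⟨rfl, Finset.Subset.refl _, fun i hi => hv i hi,
            ⟨hsat, hsatT⟩, ?_⟩)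
          intro B' hsub
          exact lemA P m c hinv.2 B B' hsub e he
        · exact ih m e v B.1 hjm ⟨hsat, hsatT⟩

lemma Mc_bisim (hp : p ∈ P) (hM' : IsModel MSys.T M') (s' : W') (d : CData n) (k : ℕ)
    (hinv : Inv P p M' k s' d) :
    CollPBisim (Mc P p M') (s', d, (∅ : Finset (Fin n)), k) M' s' p := by
  have hP : P.Nonempty := ⟨p, hp⟩
  refine ⟨fun x u'' => x.1 = u'' ∧ (x.2.2.2 = 0 ∨ Inv P p M' x.2.2.2 x.1 x.2.1),
    ⟨rfl, Or.inr hinv⟩, ?_⟩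
  rintro x u'' ⟨hx1, hx2⟩
  refine ⟨?_, ?_, ?_⟩
  · -- atoms
    intro q hq
    subst hx1
    show ((q ∈ M'.V x.1 ∧ q ≠ p) ∨ (q = p ∧ p ∈ x.2.1.S)) ↔ q ∈ M'.V x.1
    constructor
    · rintro (⟨h, _⟩ | ⟨h, _⟩)
      · exact h
      · exact absurd h hq
    · intro h
      exact Or.inl ⟨h, hq⟩
  · -- forth
    intro B hB v hv
    rcases (Mc_RB P p M' B hB x v).mp hv with heq | hedge | h0
    · subst heq
      exact ⟨u'', fun i _ => hM' i u'', hx1, hx2⟩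
    · refine ⟨v.1, fun i hi => hx1 ▸ hedge.2.2.1 i hi, rfl, Or.inr hedge.2.2.2.1⟩
    · exact ⟨v.1, fun i hi => hx1 ▸ h0.2.2 i hi, rfl, Or.inl h0.2.1⟩
  · -- back
    intro B hB v' hv'
    obtain ⟨u, c, A, j⟩ := x
    simp only at hx1 hx2
    subst hx1
    cases j with
    | zero =>
      refine ⟨(v', c, ∅, 0), ?_, rfl, Or.inl rfl⟩
      rw [Mc_RB P p M' B hB]
      exact Or.inr (Or.inr ⟨rfl, rfl, fun i hi => hv' i hi⟩)
    | succ m =>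
      have hinv2 : Inv P p M' (m+1) u c := by
        rcases hx2 with h | h
        · exact absurd h (by simp)
        · exact h
      obtain ⟨e, he, hsat⟩ :=
        (((sat_elim_toFormula_succ M' u p P hP m c).mp hinv2.1).2 ⟨B, hB⟩).1 v'
          (fun i hi => hv' i hi)
      have hsatT : SatL MSys.T (toFormula P m e) := satT_succ P m c hinv2.2 ⟨B, hB⟩ e he
      refine ⟨(v', e, B, m), ?_, rfl, Or.inr ⟨hsat, hsatT⟩⟩
      rw [Mc_RB P p M' B hB]
      refine Or.inr (Or.inl ⟨rfl, Finset.Subset.refl _, fun i hi => hv' i hi,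
        ⟨hsat, hsatT⟩, ?_⟩)
      intro B' hsub
      exact lemA P m c hinv2.2 ⟨B, hB⟩ B' hsub e he

end Construction

/-- model construction for `T_n D`. -/
theorem construction_T {n : ℕ} (P : Finset ℕ) (p : ℕ) (hp : p ∈ P) (k : ℕ)
    (d : CData n) (hδ : SatL MSys.T (cf P k d))
    (W' : Type) (M' : KModel n W') (s' : W') (hM' : IsModel MSys.T M')
    (hs' : Sat M' s' (elim p (cf P k d))) :
    ∃ (W : Type) (M : KModel n W) (s : W),
      IsModel MSys.T M ∧ Sat M s (cf P k d) ∧ CollPBisim M s M' s' p := by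
  refine ⟨W' × CData n × Finset (Fin n) × ℕ, Mc P p M', (s', d, ∅, k),
    Mc_model P p M', ?_, ?_⟩
  · have h := SM P p M' hp k k d s' ∅ le_rfl ⟨hs', hδ⟩
    rwa [toFormula_upD_self] at h
  · exact Mc_bisim P p M' hp hM' s' d k ⟨hs', hδ⟩

end DKLogic
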